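/- For every positive integer h and real d with 0 < d < 1, let n = h^2 + h. Then the ratio [∑_{j=1}^h 2 j^d] / (h^2 + h)^d is Ω(n^((1-d)/2)); concretely, ∑_{j=1}^h 2 j^d ≥ (2/(d+1))(h^(d+1) - 1), and hence the ratio is at least (2/(d+1)) · (h^(d+1) - 1) / (h^2+h)^d. -/

import Mathlib

open Finset

lemma key_step (d : ℝ) (hd0 : 0 < d) (j : ℕ) (hj : 1 ≤ j) :
    (j : ℝ) ^ (d + 1) - ((j : ℝ) - 1) ^ (d + 1) ≤ (d + 1) * (j : ℝ) ^ d := by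
  have hj1 : (1 : ℝ) ≤ (j : ℝ) := by exact_mod_cast hj
  have hab : (j : ℝ) - 1 < (j : ℝ) := by linarith
  have hderiv : ∀ x ∈ Set.Ioo ((j : ℝ) - 1) (j : ℝ),
      HasDerivAt (fun x : ℝ => x ^ (d + 1)) ((d + 1) * x ^ (d + 1 - 1)) x := by
    intro x _
    exact Real.hasDerivAt_rpow_const (Or.inr (by linarith))
  have hcont : ContinuousOn (fun x : ℝ => x ^ (d + 1)) (Set.Icc ((j : ℝ) - 1) (j : ℝ)) := by
    apply ContinuousOn.rpow_const continuousOn_id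
    intro x _
    right; linarith
  obtain ⟨c, hc, hceq⟩ := exists_hasDerivAt_eq_slope (fun x : ℝ => x ^ (d + 1))
    (fun x => (d + 1) * x ^ (d + 1 - 1)) hab hcont hderiv
  have hsub : (j : ℝ) - ((j : ℝ) - 1) = 1 := by ring
  rw [hsub, div_one] at hceq
  rw [← hceq]
  have hc0 : 0 ≤ c := by have := hc.1; linarith
  have hcj : c ≤ (j : ℝ) := le_of_lt hc.2
  have hle : c ^ (d + 1 - 1) ≤ (j : ℝ) ^ d := by
    rw [show d + 1 - 1 = d by ring]
    exact Real.rpow_le_rpow hc0 hcj (le_of_lt hd0)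
  nlinarith

lemma sum_rpow_ge (d : ℝ) (hd0 : 0 < d) (h : ℕ) :
    (h : ℝ) ^ (d + 1) / (d + 1) ≤ ∑ j ∈ Finset.Icc 1 h, (j : ℝ) ^ d := by
  have hd1 : (0:ℝ) < d + 1 := by linarith
  induction h with
  | zero => simp [Real.zero_rpow (by positivity : d + 1 ≠ 0)]
  | succ n ih =>
    have hins : Finset.Icc 1 (n + 1) = insert (n + 1) (Finset.Icc 1 n) := by
      rw [← Finset.insert_Icc_right_eq_Icc_add_one (by omega)]
    rw [hins, Finset.sum_insert (by simp)]
    have hkey := key_step d hd0 (n + 1) (by omega)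
    have hcast : ((n + 1 : ℕ) : ℝ) - 1 = (n : ℝ) := by push_cast; ring
    rw [hcast] at hkey
    have h1 : ((n + 1 : ℕ) : ℝ) ^ (d + 1) ≤ (n : ℝ) ^ (d + 1) + (d + 1) * ((n + 1 : ℕ) : ℝ) ^ d := by
      linarith
    have h2 : ((n + 1 : ℕ) : ℝ) ^ (d + 1) / (d + 1)
        ≤ (n : ℝ) ^ (d + 1) / (d + 1) + ((n + 1 : ℕ) : ℝ) ^ d := by
      rw [div_le_iff₀ hd1]
      have hge : ((n : ℝ) ^ (d + 1) / (d + 1) + ((n + 1 : ℕ) : ℝ) ^ d) * (d + 1)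
          = (n : ℝ) ^ (d + 1) + (d + 1) * ((n + 1 : ℕ) : ℝ) ^ d := by
        field_simp
      rw [hge]; exact h1
    linarith

theorem poa_lower_bound_instance (d : ℝ) (hd0 : 0 < d) (hd1 : d < 1)
    (h : ℕ) (hh : 0 < h) :
    (∑ j ∈ Finset.Icc 1 h, 2 * (j : ℝ) ^ d ≥ (2 / (d + 1)) * ((h : ℝ) ^ (d + 1) - 1)) ∧
    (∑ j ∈ Finset.Icc 1 h, 2 * (j : ℝ) ^ d) / ((h : ℝ) ^ 2 + (h : ℝ)) ^ d
      ≥ (2 / (d + 1)) * ((h : ℝ) ^ (d + 1) - 1) / ((h : ℝ) ^ 2 + (h : ℝ)) ^ d := by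
  have hd1' : (0:ℝ) < d + 1 := by linarith
  have hsum := sum_rpow_ge d hd0 h
  have hmain : ∑ j ∈ Finset.Icc 1 h, 2 * (j : ℝ) ^ d
      ≥ (2 / (d + 1)) * ((h : ℝ) ^ (d + 1) - 1) := by
    rw [← Finset.mul_sum]
    have h1 : (2 / (d + 1)) * ((h : ℝ) ^ (d + 1) - 1) ≤ (2 / (d + 1)) * (h : ℝ) ^ (d + 1) :=
      mul_le_mul_of_nonneg_left (by linarith) (by positivity)
    have h2 : (2 / (d + 1)) * (h : ℝ) ^ (d + 1) = 2 * ((h : ℝ) ^ (d + 1) / (d + 1)) := by ring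
    have h3 : 2 * ((h : ℝ) ^ (d + 1) / (d + 1)) ≤ 2 * ∑ j ∈ Finset.Icc 1 h, (j : ℝ) ^ d :=
      mul_le_mul_of_nonneg_left hsum (by norm_num)
    linarith
  refine ⟨hmain, ?_⟩
  have hden : (0:ℝ) < ((h : ℝ) ^ 2 + (h : ℝ)) ^ d := by
    have hp : (0:ℝ) < (h : ℝ) ^ 2 + (h : ℝ) := by
      have : (0:ℝ) < (h : ℝ) := by exact_mod_cast hh
      positivity
    positivity
  exact (div_le_div_iff_of_pos_right hden).mpr hmain
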